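/- Let G be an étale Hausdorff groupoid, ψ : X → G⁰ a surjective local homeomorphism from a locally compact Hausdorff space X, and let G^ψ = {(x, g, y) ∈ X × G × X : ψ(x) = r(g), ψ(y) = s(g)} be the blow-up groupoid with multiplication (x,g,y)(y,h,z) = (x,gh,z). Then the dynamic asymptotic dimension of G^ψ equals the dynamic asymptotic dimension of G. -/
import Mathlib


class GroupoidLike (G : Type*) where
  src : G → G
  rng : G → G
  inv : G → G
  mul : G → G → G

open GroupoidLike

def units (G : Type*) [GroupoidLike G] : Set G := {g | src g = g}

class EtaleGroupoid (G : Type*) [TopologicalSpace G] [GroupoidLike G] : Prop where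
  cont_src : Continuous (src : G → G)
  cont_rng : Continuous (rng : G → G)
  cont_inv : Continuous (inv : G → G)
  localHomeo_src : IsLocalHomeomorph (src : G → G)
  localHomeo_rng : IsLocalHomeomorph (rng : G → G)
  src_src : ∀ g : G, src (src g) = src g
  rng_src : ∀ g : G, rng (src g) = src g
  src_rng : ∀ g : G, src (rng g) = rng g
  rng_rng : ∀ g : G, rng (rng g) = rng g
  src_inv : ∀ g : G, src (inv g) = rng g
  rng_inv : ∀ g : G, rng (inv g) = src g
  inv_inv : ∀ g : G, inv (inv g) = g
  src_mul : ∀ g h : G, src g = rng h → src (mul g h) = src h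
  rng_mul : ∀ g h : G, src g = rng h → rng (mul g h) = rng g
  mul_assoc : ∀ g h k : G, src g = rng h → src h = rng k →
    mul (mul g h) k = mul g (mul h k)
  inv_mul : ∀ g : G, mul (inv g) g = src g
  mul_inv : ∀ g : G, mul g (inv g) = rng g
  mul_unit : ∀ g : G, mul g (src g) = g
  unit_mul : ∀ g : G, mul (rng g) g = g
  inv_mul_rev : ∀ g h : G, src g = rng h → inv (mul g h) = mul (inv h) (inv g)

section GpdDefs

variable {G : Type*} [GroupoidLike G]

/-- The restriction `G|_A = {g : s(g), r(g) ∈ A}`. -/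
def restrict (A : Set G) : Set G := {g | src g ∈ A ∧ rng g ∈ A}

/-- Membership in the subgroupoid generated by `S`. -/
inductive gen (S : Set G) : G → Prop
  | base {g : G} : g ∈ S → gen S g
  | inv {g : G} : gen S g → gen S (GroupoidLike.inv g)
  | mul {g h : G} : gen S g → gen S h → src g = rng h → gen S (GroupoidLike.mul g h)

/-- The subgroupoid generated by `S`, as a set. -/
def Gen (S : Set G) : Set G := {g | gen S g}

/-- Product of two subsets of a groupoid (composable products only). -/
def setMul (K L : Set G) : Set G :=
  {x | ∃ g ∈ K, ∃ h ∈ L, src g = rng h ∧ x = GroupoidLike.mul g h}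

/-- Powers of a subset under groupoid multiplication. -/
def spow (K : Set G) : ℕ → Set G
  | 0 => units G
  | 1 => K
  | (n + 2) => setMul K (spow K (n + 1))

/-- A subset of `G` that is a subgroupoid. -/
def IsSubgroupoid (S : Set G) : Prop :=
  (∀ g ∈ S, GroupoidLike.inv g ∈ S) ∧ (∀ g ∈ S, src g ∈ S) ∧ (∀ g ∈ S, rng g ∈ S) ∧
    ∀ g h : G, g ∈ S → h ∈ S → src g = rng h → GroupoidLike.mul g h ∈ S

variable [TopologicalSpace G]

/-- `K` belongs to `𝒪_c(G)`: open, relatively compact, and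
`K = K ∪ K⁻¹ ∪ s(K) ∪ r(K)`. -/
def memOc (K : Set G) : Prop :=
  IsOpen K ∧ IsCompact (closure K) ∧ GroupoidLike.inv '' K ⊆ K ∧
    src '' K ⊆ K ∧ rng '' K ⊆ K

/-- The (open) subgroupoid with underlying set `S ⊆ G` has dynamic asymptotic dimension
at most `d` (all notions taken relative to the subspace `S`). -/
def dadLEOn (S : Set G) (d : ℕ) : Prop :=
  ∀ K : Set G, K ⊆ S → (∃ O : Set G, IsOpen O ∧ K = O ∩ S) →
    IsCompact (closure K ∩ S) →
    ∃ U : Fin (d + 1) → Set G,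
      (∀ i, (∃ O : Set G, IsOpen O ∧ U i = O ∩ S) ∧ U i ⊆ units G ∩ S) ∧
      (src '' K ∪ rng '' K) ⊆ (⋃ i, U i) ∧
      ∀ i, IsCompact (closure (Gen (K ∩ restrict (U i))) ∩ S)

/-- The dynamic asymptotic dimension of the subgroupoid `S ⊆ G`, as an extended natural
number (`⊤` if no finite bound exists). -/
noncomputable def dadOn (S : Set G) : ℕ∞ :=
  sInf {e : ℕ∞ | ∃ d : ℕ, e = (d : ℕ∞) ∧ dadLEOn S d}

end GpdDefs

/-- The dynamic asymptotic dimension of `G`. -/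
noncomputable def dad (G : Type*) [TopologicalSpace G] [GroupoidLike G] : ℕ∞ :=
  dadOn (Set.univ : Set G)

open GroupoidLike in
/-- The blow-up (ampliation) of `G` along a surjective local homeomorphism
`ψ : X → G⁰`. -/
def Blowup (G : Type*) [GroupoidLike G] {X : Type*} (ψ : X → G) : Type _ :=
  {p : X × G × X // ψ p.1 = rng p.2.1 ∧ ψ p.2.2 = src p.2.1}

instance {G : Type*} [TopologicalSpace G] [GroupoidLike G] {X : Type*}
    [TopologicalSpace X] (ψ : X → G) : TopologicalSpace (Blowup G ψ) := by
  unfold Blowup; infer_instance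


section AuxGeneral

open GroupoidLike EtaleGroupoid Set

variable {H : Type*} [TopologicalSpace H] [GroupoidLike H] [EtaleGroupoid H]

lemma units_isOpen : IsOpen (units H) := by
  rw [isOpen_iff_forall_mem_open]
  intro u hu
  obtain ⟨e, hue, he⟩ := EtaleGroupoid.localHomeo_src (G := H) u
  have heu : (e : H → H) u = u := by rw [← congrFun he u]; exact hu
  refine ⟨e.source ∩ e.target, ?_, e.open_source.inter e.open_target, hue, ?_⟩
  · rintro v ⟨_, hvt⟩
    have h1 : src (e.symm v) = v := by rw [congrFun he (e.symm v)]; exact e.right_inv hvt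
    have : src v = v := by
      conv_lhs => rw [← h1]
      rw [src_src, h1]
    exact this
  · rw [← heu]; exact e.map_source hue

lemma mem_units_src (g : H) : src g ∈ units H := src_src g

lemma mem_units_rng (g : H) : rng g ∈ units H := src_rng g

omit [TopologicalSpace H] [EtaleGroupoid H] in
lemma gen_mono {S T : Set H} (hST : S ⊆ T) {g : H} (hg : gen S g) : gen T g := by
  induction hg with
  | base h => exact gen.base (hST h)
  | inv _ ih => exact gen.inv ih
  | mul _ _ hc ihg ihh => exact gen.mul ihg ihh hc

lemma gen_src_rng {S : Set H} {g : H} (hg : gen S g) :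
    src g ∈ src '' S ∪ rng '' S ∧ rng g ∈ src '' S ∪ rng '' S := by
  induction hg with
  | base h => exact ⟨Or.inl ⟨_, h, rfl⟩, Or.inr ⟨_, h, rfl⟩⟩
  | inv _ ih => rw [src_inv, rng_inv]; exact ⟨ih.2, ih.1⟩
  | mul _ _ hc ihg ihh => rw [src_mul _ _ hc, rng_mul _ _ hc]; exact ⟨ihh.1, ihg.2⟩

lemma relcompact_cover [T2Space H]
    (hloc : ∀ g : H, ∃ O : Set H, IsOpen O ∧ g ∈ O ∧ IsCompact (closure O))
    {C : Set H} (hC : IsCompact C) :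
    ∃ L : Set H, IsOpen L ∧ C ⊆ L ∧ IsCompact (closure L) := by
  choose f hf1 hf2 hf3 using hloc
  obtain ⟨t, ht⟩ := hC.elim_finite_subcover f hf1
    (fun g hg => mem_iUnion.mpr ⟨g, hf2 g⟩)
  refine ⟨⋃ g ∈ t, f g, isOpen_biUnion fun g _ => hf1 g, ht, ?_⟩
  have hclosed : IsClosed (⋃ g ∈ t, closure (f g)) :=
    t.finite_toSet.isClosed_biUnion fun g _ => isClosed_closure
  have hsub : closure (⋃ g ∈ t, f g) ⊆ ⋃ g ∈ t, closure (f g) :=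
    closure_minimal (iUnion₂_mono fun g _ => subset_closure) hclosed
  exact IsCompact.of_isClosed_subset
    (t.finite_toSet.isCompact_biUnion fun g _ => hf3 g) isClosed_closure hsub

end AuxGeneral


section AuxBlowup

open GroupoidLike EtaleGroupoid Set Topology

variable {G X : Type*} [TopologicalSpace G] [T2Space G] [GroupoidLike G]
    [EtaleGroupoid G] [TopologicalSpace X] [T2Space X] [LocallyCompactSpace X]
    {ψ : X → G}

/-- The canonical projection of the blow-up. -/
def bpi : Blowup G ψ → X × G × X := fun p => p.1

omit [T2Space G] [EtaleGroupoid G] [T2Space X] [LocallyCompactSpace X] in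
lemma cont_bval : Continuous (bpi : Blowup G ψ → X × G × X) := continuous_subtype_val

omit [T2Space X] [LocallyCompactSpace X] in
lemma closedEmb_bval (hψ : IsLocalHomeomorph ψ) :
    IsClosedEmbedding (bpi : Blowup G ψ → X × G × X) := by
  apply Topology.IsClosedEmbedding.subtypeVal
  have h1 : IsClosed {p : X × G × X | ψ p.1 = rng p.2.1} :=
    isClosed_eq (hψ.continuous.comp continuous_fst)
      (EtaleGroupoid.cont_rng.comp (continuous_fst.comp continuous_snd))
  have h2 : IsClosed {p : X × G × X | ψ p.2.2 = src p.2.1} :=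
    isClosed_eq (hψ.continuous.comp (continuous_snd.comp continuous_snd))
      (EtaleGroupoid.cont_src.comp (continuous_fst.comp continuous_snd))
  exact h1.inter h2

/-- The map to the `G`-component. -/
def bp : Blowup G ψ → G := fun p => p.1.2.1

omit [T2Space G] [EtaleGroupoid G] [T2Space X] [LocallyCompactSpace X] in
lemma cont_bp : Continuous (bp : Blowup G ψ → G) :=
  (continuous_fst.comp continuous_snd).comp cont_bval

omit [T2Space G] [T2Space X] [LocallyCompactSpace X] in
/-- The canonical inclusion of `X` as units of the blow-up. -/
def biota (hrange : Set.range ψ = units G) (x : X) : Blowup G ψ := by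
  have hu : ψ x ∈ units G := by rw [← hrange]; exact Set.mem_range_self x
  have h : src (ψ x) = ψ x := hu
  refine ⟨(x, ψ x, x), ?_, h.symm⟩
  have h2 : rng (ψ x) = ψ x := by
    conv_lhs => rw [← h]
    rw [rng_src, h]
  exact h2.symm

omit [T2Space G] [T2Space X] [LocallyCompactSpace X] in
lemma cont_biota (hrange : Set.range ψ = units G) (hψ : IsLocalHomeomorph ψ) :
    Continuous (biota (ψ := ψ) hrange) :=
  Continuous.subtype_mk (continuous_id.prodMk (hψ.continuous.prodMk continuous_id)) _

section Hom

variable [GroupoidLike (Blowup G ψ)]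

omit [T2Space G] [EtaleGroupoid G] [TopologicalSpace X] [T2Space X] [LocallyCompactSpace X] in
lemma bp_src (hsrc : ∀ p : Blowup G ψ, (src p).1 = (p.1.2.2, src p.1.2.1, p.1.2.2))
    (p : Blowup G ψ) : bp (src p) = src (bp p) := by
  show (src p).1.2.1 = src p.1.2.1
  rw [hsrc p]

omit [T2Space G] [EtaleGroupoid G] [TopologicalSpace X] [T2Space X] [LocallyCompactSpace X] in
lemma bp_rng (hrng : ∀ p : Blowup G ψ, (rng p).1 = (p.1.1, rng p.1.2.1, p.1.1))
    (p : Blowup G ψ) : bp (rng p) = rng (bp p) := by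
  show (rng p).1.2.1 = rng p.1.2.1
  rw [hrng p]

omit [T2Space G] [EtaleGroupoid G] [TopologicalSpace X] [T2Space X] [LocallyCompactSpace X] in
lemma bp_inv (hinv : ∀ p : Blowup G ψ,
      (GroupoidLike.inv p).1 = (p.1.2.2, GroupoidLike.inv p.1.2.1, p.1.1))
    (p : Blowup G ψ) : bp (GroupoidLike.inv p) = GroupoidLike.inv (bp p) := by
  show (GroupoidLike.inv p).1.2.1 = GroupoidLike.inv p.1.2.1
  rw [hinv p]

omit [T2Space G] [EtaleGroupoid G] [TopologicalSpace X] [T2Space X] [LocallyCompactSpace X] in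
lemma bp_mul (hmul : ∀ p q : Blowup G ψ, src p = rng q →
      (GroupoidLike.mul p q).1 = (p.1.1, GroupoidLike.mul p.1.2.1 q.1.2.1, q.1.2.2))
    (p q : Blowup G ψ) (hc : src p = rng q) :
    bp (GroupoidLike.mul p q) = GroupoidLike.mul (bp p) (bp q) := by
  show (GroupoidLike.mul p q).1.2.1 = GroupoidLike.mul p.1.2.1 q.1.2.1
  rw [hmul p q hc]

omit [T2Space G] [TopologicalSpace X] [T2Space X] [LocallyCompactSpace X] in
lemma bp_gen (hsrc : ∀ p : Blowup G ψ, (src p).1 = (p.1.2.2, src p.1.2.1, p.1.2.2))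
    (hrng : ∀ p : Blowup G ψ, (rng p).1 = (p.1.1, rng p.1.2.1, p.1.1))
    (hinv : ∀ p : Blowup G ψ,
      (GroupoidLike.inv p).1 = (p.1.2.2, GroupoidLike.inv p.1.2.1, p.1.1))
    (hmul : ∀ p q : Blowup G ψ, src p = rng q →
      (GroupoidLike.mul p q).1 = (p.1.1, GroupoidLike.mul p.1.2.1 q.1.2.1, q.1.2.2))
    {S : Set (Blowup G ψ)} {p : Blowup G ψ} (hp : gen S p) : gen (bp '' S) (bp p) := by
  induction hp with
  | base h => exact gen.base ⟨_, h, rfl⟩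
  | inv _ ih => rw [bp_inv hinv]; exact gen.inv ih
  | mul _ _ hc ihg ihh =>
      rw [bp_mul hmul _ _ hc]
      exact gen.mul ihg ihh (by rw [← bp_src hsrc, ← bp_rng hrng, hc])

omit [T2Space G] [EtaleGroupoid G] [TopologicalSpace X] [T2Space X] [LocallyCompactSpace X] in
lemma coord_gen (hinv : ∀ p : Blowup G ψ,
      (GroupoidLike.inv p).1 = (p.1.2.2, GroupoidLike.inv p.1.2.1, p.1.1))
    (hmul : ∀ p q : Blowup G ψ, src p = rng q →
      (GroupoidLike.mul p q).1 = (p.1.1, GroupoidLike.mul p.1.2.1 q.1.2.1, q.1.2.2))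
    {S : Set (Blowup G ψ)} {p : Blowup G ψ} (hp : gen S p) :
    p.1.1 ∈ (fun q : Blowup G ψ => q.1.1) '' S ∪ (fun q : Blowup G ψ => q.1.2.2) '' S ∧
      p.1.2.2 ∈ (fun q : Blowup G ψ => q.1.1) '' S ∪ (fun q : Blowup G ψ => q.1.2.2) '' S := by
  induction hp with
  | base h => exact ⟨Or.inl ⟨_, h, rfl⟩, Or.inr ⟨_, h, rfl⟩⟩
  | inv _ ih => rw [hinv]; exact ⟨ih.2, ih.1⟩
  | mul _ _ hc ihg ihh => rw [hmul _ _ hc]; exact ⟨ihg.1, ihh.2⟩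

omit [T2Space G] [TopologicalSpace X] [T2Space X] [LocallyCompactSpace X] in
lemma src_eq_biota (hrange : Set.range ψ = units G)
    (hsrc : ∀ p : Blowup G ψ, (src p).1 = (p.1.2.2, src p.1.2.1, p.1.2.2))
    (p : Blowup G ψ) : src p = biota hrange p.1.2.2 := by
  apply Subtype.ext
  rw [hsrc p]
  show (p.1.2.2, src p.1.2.1, p.1.2.2) = (p.1.2.2, ψ p.1.2.2, p.1.2.2)
  rw [p.2.2]

omit [T2Space G] [TopologicalSpace X] [T2Space X] [LocallyCompactSpace X] in
lemma rng_eq_biota (hrange : Set.range ψ = units G)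
    (hrng : ∀ p : Blowup G ψ, (rng p).1 = (p.1.1, rng p.1.2.1, p.1.1))
    (p : Blowup G ψ) : rng p = biota hrange p.1.1 := by
  apply Subtype.ext
  rw [hrng p]
  show (p.1.1, rng p.1.2.1, p.1.1) = (p.1.1, ψ p.1.1, p.1.1)
  rw [p.2.1]

end Hom

omit [T2Space X] [LocallyCompactSpace X] in
lemma isCompact_box (hψ : IsLocalHomeomorph ψ) {A : Set X} {C : Set G}
    (hA : IsCompact A) (hC : IsCompact C) :
    IsCompact {p : Blowup G ψ | p.1.1 ∈ A ∧ p.1.2.1 ∈ C ∧ p.1.2.2 ∈ A} :=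
  (closedEmb_bval hψ).isCompact_preimage (hA.prod (hC.prod hA))

lemma exists_relcompact_open_superset (hrange : Set.range ψ = units G)
    (hψ : IsLocalHomeomorph ψ) {C : Set G} (hC : IsCompact C) :
    ∃ L : Set G, IsOpen L ∧ C ⊆ L ∧ IsCompact (closure L) := by
  refine relcompact_cover ?_ hC
  intro g
  obtain ⟨e, hg, he⟩ := EtaleGroupoid.localHomeo_src (G := G) g
  have hsg : src g ∈ Set.range ψ := by rw [hrange]; exact mem_units_src g
  obtain ⟨x, hx⟩ := hsg
  have hxt : ψ x ∈ e.target := by rw [hx, congrFun he g]; exact e.map_source hg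
  have hnhds : ψ ⁻¹' e.target ∈ nhds x :=
    (e.open_target.preimage hψ.continuous).mem_nhds hxt
  obtain ⟨M, hMn, hMsub, hMc⟩ := LocallyCompactSpace.local_compact_nhds x _ hnhds
  have hψM : ψ '' M ⊆ e.target := Set.image_subset_iff.mpr hMsub
  have hNc : IsCompact (e.symm '' (ψ '' M)) :=
    (hMc.image hψ.continuous).image_of_continuousOn (e.continuousOn_symm.mono hψM)
  refine ⟨e.source ∩ e ⁻¹' (ψ '' interior M), e.continuousOn.isOpen_inter_preimage
    e.open_source (hψ.isOpenMap _ isOpen_interior), ⟨hg, ?_⟩, ?_⟩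
  · exact ⟨x, mem_interior_iff_mem_nhds.mpr hMn, by rw [hx, congrFun he g]⟩
  · have hsub : e.source ∩ e ⁻¹' (ψ '' interior M) ⊆ e.symm '' (ψ '' M) := by
      rintro w ⟨hws, hwm⟩
      exact ⟨e w, Set.image_mono interior_subset hwm, e.left_inv hws⟩
    exact IsCompact.of_isClosed_subset hNc isClosed_closure
      (closure_minimal hsub hNc.isClosed)

omit [T2Space G] [EtaleGroupoid G] in
lemma exists_A (hψ : IsLocalHomeomorph ψ) {C : Set G} (hC : IsCompact C)
    (hCu : C ⊆ Set.range ψ) :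
    ∃ A : Set X, IsOpen A ∧ IsCompact (closure A) ∧ C ⊆ ψ '' A := by
  have hpt : ∀ u : C, ∃ A : Set X, IsOpen A ∧ IsCompact (closure A) ∧ (u : G) ∈ ψ '' A := by
    rintro ⟨u, hu⟩
    obtain ⟨x, hx⟩ := hCu hu
    obtain ⟨M, hMn, _, hMc⟩ := LocallyCompactSpace.local_compact_nhds x Set.univ
      Filter.univ_mem
    exact ⟨interior M, isOpen_interior,
      IsCompact.of_isClosed_subset hMc isClosed_closure
        (closure_minimal interior_subset hMc.isClosed),
      ⟨x, mem_interior_iff_mem_nhds.mpr hMn, hx⟩⟩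
  choose f hf1 hf2 hf3 using hpt
  obtain ⟨t, ht⟩ := hC.elim_finite_subcover (fun u : C => ψ '' f u)
    (fun u => hψ.isOpenMap _ (hf1 u))
    (fun u hu => Set.mem_iUnion.mpr ⟨⟨u, hu⟩, hf3 ⟨u, hu⟩⟩)
  refine ⟨⋃ u ∈ t, f u, isOpen_biUnion fun u _ => hf1 u, ?_, ?_⟩
  · have hclosed : IsClosed (⋃ u ∈ t, closure (f u)) :=
      t.finite_toSet.isClosed_biUnion fun u _ => isClosed_closure
    exact IsCompact.of_isClosed_subset
      (t.finite_toSet.isCompact_biUnion fun u _ => hf2 u) isClosed_closure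
      (closure_minimal (Set.iUnion₂_mono fun u _ => subset_closure) hclosed)
  · rw [Set.image_iUnion₂]; exact ht

end AuxBlowup


section MainDirections

open GroupoidLike EtaleGroupoid Set Topology

variable {G X : Type*} [TopologicalSpace G] [T2Space G] [GroupoidLike G]
    [EtaleGroupoid G] [TopologicalSpace X] [T2Space X] [LocallyCompactSpace X]
    {ψ : X → G} [GroupoidLike (Blowup G ψ)] [EtaleGroupoid (Blowup G ψ)]

lemma dir1 (hrange : Set.range ψ = units G) (hψ : IsLocalHomeomorph ψ)
    (hsrc : ∀ p : Blowup G ψ, (src p).1 = (p.1.2.2, src p.1.2.1, p.1.2.2))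
    (hrng : ∀ p : Blowup G ψ, (rng p).1 = (p.1.1, rng p.1.2.1, p.1.1))
    (hinv : ∀ p : Blowup G ψ,
      (GroupoidLike.inv p).1 = (p.1.2.2, GroupoidLike.inv p.1.2.1, p.1.1))
    (hmul : ∀ p q : Blowup G ψ, src p = rng q →
      (GroupoidLike.mul p q).1 = (p.1.1, GroupoidLike.mul p.1.2.1 q.1.2.1, q.1.2.2))
    (d : ℕ) (h : dadLEOn (Set.univ : Set G) d) :
    dadLEOn (Set.univ : Set (Blowup G ψ)) d := by
  rintro K - ⟨O, hO, hKO⟩ hKc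
  rw [Set.inter_univ] at hKc
  have hCcomp : IsCompact (bp '' closure K) := hKc.image cont_bp
  obtain ⟨L, hLopen, hCL, hLc⟩ := exists_relcompact_open_superset hrange hψ hCcomp
  obtain ⟨U, hU1, hU2, hU3⟩ := h L (Set.subset_univ L) ⟨L, hLopen, (Set.inter_univ L).symm⟩
    (by rw [Set.inter_univ]; exact hLc)
  have hUopen : ∀ i, IsOpen (U i) := by
    intro i
    obtain ⟨O', hO', hUO'⟩ := (hU1 i).1
    rw [hUO', Set.inter_univ]; exact hO'
  refine ⟨fun i => bp ⁻¹' (U i) ∩ units (Blowup G ψ), fun i =>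
    ⟨⟨_, ((hUopen i).preimage cont_bp).inter units_isOpen, (Set.inter_univ _).symm⟩,
      fun p hp => ⟨hp.2, Set.mem_univ _⟩⟩, ?_, ?_⟩
  · rintro p (⟨q, hq, rfl⟩ | ⟨q, hq, rfl⟩)
    · have h1 : src (bp q) ∈ src '' L ∪ rng '' L :=
        Or.inl ⟨bp q, hCL ⟨q, subset_closure hq, rfl⟩, rfl⟩
      obtain ⟨i, hi⟩ := Set.mem_iUnion.mp (hU2 h1)
      refine Set.mem_iUnion.mpr ⟨i, ⟨?_, mem_units_src q⟩⟩
      show bp (src q) ∈ U i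
      rw [bp_src hsrc]; exact hi
    · have h1 : rng (bp q) ∈ src '' L ∪ rng '' L :=
        Or.inr ⟨bp q, hCL ⟨q, subset_closure hq, rfl⟩, rfl⟩
      obtain ⟨i, hi⟩ := Set.mem_iUnion.mp (hU2 h1)
      refine Set.mem_iUnion.mpr ⟨i, ⟨?_, mem_units_rng q⟩⟩
      show bp (rng q) ∈ U i
      rw [bp_rng hrng]; exact hi
  · intro i
    rw [Set.inter_univ]
    set W : Set (Blowup G ψ) := bp ⁻¹' (U i) ∩ units (Blowup G ψ) with hW
    set S : Set (Blowup G ψ) := K ∩ restrict W with hS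
    have hLU := hU3 i
    rw [Set.inter_univ] at hLU
    set B : Set X := (fun q : Blowup G ψ => q.1.1) '' closure K ∪
      (fun q : Blowup G ψ => q.1.2.2) '' closure K with hB
    have hBc : IsCompact B :=
      (hKc.image (continuous_fst.comp cont_bval)).union
        (hKc.image ((continuous_snd.comp continuous_snd).comp cont_bval))
    set T : Set (Blowup G ψ) :=
      {p | p.1.1 ∈ B ∧ p.1.2.1 ∈ closure (Gen (L ∩ restrict (U i))) ∧ p.1.2.2 ∈ B} with hT
    have hTc : IsCompact T := isCompact_box hψ hBc hLU
    have hTcl : IsClosed T := by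
      have : T = bp ⁻¹' (closure (Gen (L ∩ restrict (U i)))) ∩
          ((fun q : Blowup G ψ => q.1.1) ⁻¹' B ∩ (fun q : Blowup G ψ => q.1.2.2) ⁻¹' B) := by
        ext p; constructor
        · rintro ⟨h1, h2, h3⟩; exact ⟨h2, h1, h3⟩
        · rintro ⟨h2, h1, h3⟩; exact ⟨h1, h2, h3⟩
      rw [this]
      exact (isClosed_closure.preimage cont_bp).inter
        ((hBc.isClosed.preimage (continuous_fst.comp cont_bval)).inter
          (hBc.isClosed.preimage ((continuous_snd.comp continuous_snd).comp cont_bval)))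
    have hGenT : Gen S ⊆ T := by
      intro p hp
      have hcoord := coord_gen hinv hmul hp
      have hsubB : (fun q : Blowup G ψ => q.1.1) '' S ∪
          (fun q : Blowup G ψ => q.1.2.2) '' S ⊆ B := by
        apply Set.union_subset_union <;>
          exact Set.image_mono ((Set.inter_subset_left).trans subset_closure)
      have hbp : gen (bp '' S) (bp p) := bp_gen hsrc hrng hinv hmul hp
      have himg : bp '' S ⊆ L ∩ restrict (U i) := by
        rintro - ⟨q, ⟨hqK, hqr⟩, rfl⟩
        refine ⟨hCL ⟨q, subset_closure hqK, rfl⟩, ?_, ?_⟩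
        · show src (bp q) ∈ U i
          rw [← bp_src hsrc]; exact hqr.1.1
        · show rng (bp q) ∈ U i
          rw [← bp_rng hrng]; exact hqr.2.1
      exact ⟨hsubB hcoord.1, subset_closure (gen_mono himg hbp), hsubB hcoord.2⟩
    exact IsCompact.of_isClosed_subset hTc isClosed_closure (closure_minimal hGenT hTcl)

lemma dir2 (hrange : Set.range ψ = units G) (hψ : IsLocalHomeomorph ψ)
    (hsrc : ∀ p : Blowup G ψ, (src p).1 = (p.1.2.2, src p.1.2.1, p.1.2.2))
    (hrng : ∀ p : Blowup G ψ, (rng p).1 = (p.1.1, rng p.1.2.1, p.1.1))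
    (hinv : ∀ p : Blowup G ψ,
      (GroupoidLike.inv p).1 = (p.1.2.2, GroupoidLike.inv p.1.2.1, p.1.1))
    (hmul : ∀ p q : Blowup G ψ, src p = rng q →
      (GroupoidLike.mul p q).1 = (p.1.1, GroupoidLike.mul p.1.2.1 q.1.2.1, q.1.2.2))
    (d : ℕ) (h : dadLEOn (Set.univ : Set (Blowup G ψ)) d) :
    dadLEOn (Set.univ : Set G) d := by
  rintro K - ⟨O, hO, hKO⟩ hKc
  rw [Set.inter_univ] at hKc
  have hKopen : IsOpen K := by rw [hKO, Set.inter_univ]; exact hO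
  -- choose a relatively compact open A ⊆ X whose ψ-image covers all units of closure K
  set C : Set G := src '' closure K ∪ rng '' closure K with hC
  have hCc : IsCompact C :=
    (hKc.image EtaleGroupoid.cont_src).union (hKc.image EtaleGroupoid.cont_rng)
  have hCu : C ⊆ Set.range ψ := by
    rintro - (⟨g, -, rfl⟩ | ⟨g, -, rfl⟩) <;> rw [hrange]
    exacts [mem_units_src g, mem_units_rng g]
  obtain ⟨A, hAopen, hAc, hCA⟩ := exists_A hψ hCc hCu
  -- the lifted compact set
  set Kt : Set (Blowup G ψ) := {p | p.1.1 ∈ A ∧ p.1.2.1 ∈ K ∧ p.1.2.2 ∈ A} with hKt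
  have hKtopen : IsOpen Kt := by
    have : Kt = bpi ⁻¹' (A ×ˢ K ×ˢ A) := rfl
    rw [this]
    exact (hAopen.prod (hKopen.prod hAopen)).preimage cont_bval
  have hKtc : IsCompact (closure Kt ∩ Set.univ) := by
    rw [Set.inter_univ]
    have hbox : IsCompact {p : Blowup G ψ | p.1.1 ∈ closure A ∧ p.1.2.1 ∈ closure K ∧
        p.1.2.2 ∈ closure A} := isCompact_box hψ hAc hKc
    have hboxcl : IsClosed {p : Blowup G ψ | p.1.1 ∈ closure A ∧ p.1.2.1 ∈ closure K ∧
        p.1.2.2 ∈ closure A} := by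
      have : {p : Blowup G ψ | p.1.1 ∈ closure A ∧ p.1.2.1 ∈ closure K ∧
          p.1.2.2 ∈ closure A} = bpi ⁻¹' (closure A ×ˢ closure K ×ˢ closure A) := rfl
      rw [this]
      exact (isClosed_closure.prod (isClosed_closure.prod isClosed_closure)).preimage
        cont_bval
    refine IsCompact.of_isClosed_subset hbox isClosed_closure (closure_minimal ?_ hboxcl)
    rintro p ⟨h1, h2, h3⟩
    exact ⟨subset_closure h1, subset_closure h2, subset_closure h3⟩
  obtain ⟨W, hW1, hW2, hW3⟩ := h Kt (Set.subset_univ Kt)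
    ⟨Kt, hKtopen, (Set.inter_univ Kt).symm⟩ hKtc
  have hWopen : ∀ i, IsOpen (W i) := by
    intro i
    obtain ⟨O', hO', hWO'⟩ := (hW1 i).1
    rw [hWO', Set.inter_univ]; exact hO'
  set U : Fin (d + 1) → Set G := fun i => ψ '' (A ∩ biota hrange ⁻¹' (W i)) with hU
  have hUsub : ∀ i, K ∩ restrict (U i) ⊆ restrict (U i) := fun i => Set.inter_subset_right
  have hsubU : ∀ i, src '' (K ∩ restrict (U i)) ∪ rng '' (K ∩ restrict (U i)) ⊆ U i := by
    rintro i - (⟨k, hk, rfl⟩ | ⟨k, hk, rfl⟩)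
    exacts [hk.2.1, hk.2.2]
  refine ⟨U, fun i => ⟨⟨U i, hψ.isOpenMap _ (hAopen.inter
      ((hWopen i).preimage (cont_biota hrange hψ))), (Set.inter_univ _).symm⟩, ?_⟩, ?_, ?_⟩
  · rintro - ⟨z, -, rfl⟩
    exact ⟨by rw [← hrange]; exact Set.mem_range_self z, Set.mem_univ _⟩
  · rintro u (⟨g, hg, rfl⟩ | ⟨g, hg, rfl⟩)
    · obtain ⟨y, hyA, hy⟩ := hCA (Or.inl ⟨g, subset_closure hg, rfl⟩)
      obtain ⟨x, hxA, hx⟩ := hCA (Or.inr ⟨g, subset_closure hg, rfl⟩)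
      set p : Blowup G ψ := ⟨(x, g, y), hx, hy⟩ with hp
      have hpKt : p ∈ Kt := ⟨hxA, hg, hyA⟩
      obtain ⟨i, hi⟩ := Set.mem_iUnion.mp (hW2 (Or.inl ⟨p, hpKt, rfl⟩))
      have hsb : src p = biota hrange y := src_eq_biota hrange hsrc p
      refine Set.mem_iUnion.mpr ⟨i, ⟨y, ⟨hyA, ?_⟩, hy⟩⟩
      show biota hrange y ∈ W i
      rw [← hsb]; exact hi
    · obtain ⟨y, hyA, hy⟩ := hCA (Or.inl ⟨g, subset_closure hg, rfl⟩)
      obtain ⟨x, hxA, hx⟩ := hCA (Or.inr ⟨g, subset_closure hg, rfl⟩)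
      set p : Blowup G ψ := ⟨(x, g, y), hx, hy⟩ with hp
      have hpKt : p ∈ Kt := ⟨hxA, hg, hyA⟩
      obtain ⟨i, hi⟩ := Set.mem_iUnion.mp (hW2 (Or.inr ⟨p, hpKt, rfl⟩))
      have hrb : rng p = biota hrange x := rng_eq_biota hrange hrng p
      refine Set.mem_iUnion.mpr ⟨i, ⟨x, ⟨hxA, ?_⟩, hx⟩⟩
      show biota hrange x ∈ W i
      rw [← hrb]; exact hi
  · intro i
    rw [Set.inter_univ]
    have hWU := hW3 i
    rw [Set.inter_univ] at hWU
    have himg : IsCompact (bp '' closure (Gen (Kt ∩ restrict (W i)))) := hWU.image cont_bp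
    -- the key lifting claim
    have claim : ∀ g : G, gen (K ∩ restrict (U i)) g → ∀ p : Blowup G ψ,
        p.1.2.1 = g → p.1.1 ∈ A → p.1.2.2 ∈ A → biota hrange p.1.1 ∈ W i →
        biota hrange p.1.2.2 ∈ W i → gen (Kt ∩ restrict (W i)) p := by
      intro g hg
      induction hg with
      | base hgS =>
        intro p hpg hpA hpA' hWx hWy
        refine gen.base ⟨⟨hpA, ?_, hpA'⟩, ?_, ?_⟩
        · rw [hpg]; exact hgS.1
        · rw [src_eq_biota hrange hsrc p]; exact hWy
        · rw [rng_eq_biota hrange hrng p]; exact hWx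
      | inv hg0 ih =>
        rename_i g0
        intro p hpg hpA hpA' hWx hWy
        have h1 : ψ p.1.2.2 = rng g0 := by rw [p.2.2, hpg, src_inv]
        have h2 : ψ p.1.1 = src g0 := by rw [p.2.1, hpg, rng_inv]
        set q : Blowup G ψ := ⟨(p.1.2.2, g0, p.1.1), h1, h2⟩ with hq
        have hgenq := ih q rfl hpA' hpA hWy hWx
        have hpq : p = GroupoidLike.inv q := by
          apply Subtype.ext
          rw [hinv q]
          show p.1 = (p.1.1, GroupoidLike.inv g0, p.1.2.2)
          rw [← hpg]
        rw [hpq]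
        exact gen.inv hgenq
      | mul hg0 hh0 hc ihg ihh =>
        rename_i g0 h0
        intro p hpg hpA hpA' hWx hWy
        obtain ⟨z, ⟨hzA, hzW⟩, hz⟩ := hsubU i (gen_src_rng hg0).1
        have h1 : ψ p.1.1 = rng g0 := by rw [p.2.1, hpg, rng_mul _ _ hc]
        have h2 : ψ p.1.2.2 = src h0 := by rw [p.2.2, hpg, src_mul _ _ hc]
        set q1 : Blowup G ψ := ⟨(p.1.1, g0, z), h1, hz⟩ with hq1
        set q2 : Blowup G ψ := ⟨(z, h0, p.1.2.2), by rw [hz, hc], h2⟩ with hq2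
        have hgen1 := ihg q1 rfl hpA hzA hWx hzW
        have hgen2 := ihh q2 rfl hzA hpA' hzW hWy
        have hcomp : src q1 = rng q2 := by
          rw [src_eq_biota hrange hsrc q1, rng_eq_biota hrange hrng q2]
        have hpq : p = GroupoidLike.mul q1 q2 := by
          apply Subtype.ext
          rw [hmul q1 q2 hcomp]
          show p.1 = (p.1.1, GroupoidLike.mul g0 h0, p.1.2.2)
          rw [← hpg]
        rw [hpq]
        exact gen.mul hgen1 hgen2 hcomp
    have hGsub : Gen (K ∩ restrict (U i)) ⊆ bp '' closure (Gen (Kt ∩ restrict (W i))) := by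
      intro g hg
      obtain ⟨x, ⟨hxA, hxW⟩, hx⟩ := hsubU i (gen_src_rng hg).2
      obtain ⟨y, ⟨hyA, hyW⟩, hy⟩ := hsubU i (gen_src_rng hg).1
      exact ⟨⟨(x, g, y), hx, hy⟩,
        subset_closure (claim g hg ⟨(x, g, y), hx, hy⟩ rfl hxA hyA hxW hyW), rfl⟩
    exact IsCompact.of_isClosed_subset himg isClosed_closure
      (closure_minimal hGsub himg.isClosed)

end MainDirections

open GroupoidLike in
/-- Morita invariance via blow-ups: if `ψ : X → G⁰` is a surjective local homeomorphism
from a locally compact Hausdorff space, then the blow-up groupoid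
`G^ψ = {(x,g,y) : ψ(x) = r(g), ψ(y) = s(g)}`, with multiplication
`(x,g,y)(y,h,z) = (x,gh,z)`, has the same dynamic asymptotic dimension as `G`. -/
theorem stmt6 {G X : Type*} [TopologicalSpace G] [T2Space G] [GroupoidLike G]
    [EtaleGroupoid G] [TopologicalSpace X] [T2Space X] [LocallyCompactSpace X]
    (ψ : X → G) (hrange : Set.range ψ = units G) (hψ : IsLocalHomeomorph ψ)
    [GroupoidLike (Blowup G ψ)] [EtaleGroupoid (Blowup G ψ)]
    (hsrc : ∀ p : Blowup G ψ, (src p).1 = (p.1.2.2, src p.1.2.1, p.1.2.2))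
    (hrng : ∀ p : Blowup G ψ, (rng p).1 = (p.1.1, rng p.1.2.1, p.1.1))
    (hinv : ∀ p : Blowup G ψ,
      (GroupoidLike.inv p).1 = (p.1.2.2, GroupoidLike.inv p.1.2.1, p.1.1))
    (hmul : ∀ p q : Blowup G ψ, src p = rng q →
      (GroupoidLike.mul p q).1 = (p.1.1, GroupoidLike.mul p.1.2.1 q.1.2.1, q.1.2.2)) :
    dad (Blowup G ψ) = dad G := by
  have key : ∀ d : ℕ, dadLEOn (Set.univ : Set (Blowup G ψ)) d ↔
      dadLEOn (Set.univ : Set G) d := fun d =>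
    ⟨dir2 hrange hψ hsrc hrng hinv hmul d, dir1 hrange hψ hsrc hrng hinv hmul d⟩
  unfold dad dadOn
  congr 1
  ext e
  simp only [Set.mem_setOf_eq]
  constructor
  · rintro ⟨d, rfl, hd⟩; exact ⟨d, rfl, (key d).mp hd⟩
  · rintro ⟨d, rfl, hd⟩; exact ⟨d, rfl, (key d).mpr hd⟩
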